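/- Let F : ℕ → ℝ≥0 be bounded, N ∈ ℕ, x ∈ [0,1], and define V(N,x) = Σ_{m∈ℕ} [N ≤ m]·(x^{m−N}/(m−N)! − x^{m−N+1}/(m−N+1)!)·F(m). Define g(y) = [y ≤ x]·V(N+1, y) + [x ≤ y]·F(N). Then ∫₀¹ g(y) dy = V(N, x). -/

import Mathlib

open intervalIntegral

open MeasureTheory Set

noncomputable def tm (k : ℕ) (x : ℝ) : ℝ :=
  x ^ k / (Nat.factorial k : ℝ) - x ^ (k + 1) / (Nat.factorial (k + 1) : ℝ)

lemma tm_nonneg {x : ℝ} (hx0 : 0 ≤ x) (hx1 : x ≤ 1) (k : ℕ) : 0 ≤ tm k x := by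
  have h1 : x ^ (k + 1) ≤ x ^ k := pow_le_pow_of_le_one hx0 hx1 (Nat.le_succ k)
  have h2 : (Nat.factorial k : ℝ) ≤ (Nat.factorial (k + 1) : ℝ) := by
    exact_mod_cast Nat.factorial_le (Nat.le_succ k)
  have hk : (0:ℝ) < Nat.factorial k := by positivity
  have := div_le_div₀ (by positivity) h1 hk h2
  simpa [tm, sub_nonneg] using this

lemma tm_le {x : ℝ} (hx0 : 0 ≤ x) (hx1 : x ≤ 1) (k : ℕ) :
    tm k x ≤ 1 / (Nat.factorial k : ℝ) := by
  have h1 : x ^ k ≤ 1 := pow_le_one₀ hx0 hx1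
  have hk : (0:ℝ) < Nat.factorial k := by positivity
  have h2 : (0:ℝ) ≤ x ^ (k+1) / (Nat.factorial (k+1) : ℝ) := by positivity
  have h3 : x ^ k / (Nat.factorial k : ℝ) ≤ 1 / (Nat.factorial k : ℝ) := by gcongr
  simp only [tm]; linarith

noncomputable def V (F : ℕ → ℝ) (N : ℕ) (x : ℝ) : ℝ :=
  ∑' m : ℕ, (if N ≤ m then
      x ^ (m - N) / (Nat.factorial (m - N) : ℝ)
        - x ^ (m - N + 1) / (Nat.factorial (m - N + 1) : ℝ)
    else 0) * F m

lemma V_eq (F : ℕ → ℝ) (N : ℕ) (x : ℝ) :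
    V F N x = ∑' k : ℕ, tm k x * F (N + k) := by
  rw [V, ← Function.Injective.tsum_eq (g := fun k : ℕ => N + k)
      (add_right_injective N) ?_]
  · exact tsum_congr fun k => by simp [tm]
  · intro m hm
    simp only [Function.mem_support, ne_eq] at hm
    by_cases h : N ≤ m
    · exact ⟨m - N, by simp; omega⟩
    · simp [h] at hm

lemma summable_tmF (F : ℕ → ℝ) (M : ℝ) (hnonneg : ∀ n, 0 ≤ F n) (hM : ∀ n, F n ≤ M)
    {x : ℝ} (hx0 : 0 ≤ x) (hx1 : x ≤ 1) (N : ℕ) :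
    Summable (fun k : ℕ => tm k x * F (N + k)) := by
  have hM0 : 0 ≤ M := le_trans (hnonneg 0) (hM 0)
  refine Summable.of_norm_bounded (g := fun k => M * ((1:ℝ) ^ k / (Nat.factorial k : ℝ)))
    ((Real.summable_pow_div_factorial 1).mul_left M) (fun k => ?_)
  have h1 := tm_nonneg hx0 hx1 k
  have h2 := tm_le hx0 hx1 k
  have h3 := hnonneg (N + k)
  have h4 := hM (N + k)
  simp only [one_pow]
  rw [Real.norm_of_nonneg (mul_nonneg h1 h3)]
  calc tm k x * F (N + k) ≤ (1 / (Nat.factorial k : ℝ)) * M :=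
        mul_le_mul h2 h4 h3 (by positivity)
    _ = M * (1 / (Nat.factorial k : ℝ)) := by ring

lemma integ_tm (x : ℝ) (k : ℕ) :
    ∫ y in (0:ℝ)..x, tm k y = tm (k + 1) x := by
  have hik : IntervalIntegrable (fun y : ℝ => y ^ k / (Nat.factorial k : ℝ)) volume 0 x :=
    ((continuous_pow k).div_const _).intervalIntegrable 0 x
  have hik1 : IntervalIntegrable (fun y : ℝ => y ^ (k+1) / (Nat.factorial (k+1) : ℝ)) volume 0 x :=
    ((continuous_pow (k+1)).div_const _).intervalIntegrable 0 x
  have hp : ∀ n : ℕ, ∫ y in (0:ℝ)..x, y ^ n / (Nat.factorial n : ℝ)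
      = x ^ (n+1) / (Nat.factorial (n+1) : ℝ) := by
    intro n
    rw [intervalIntegral.integral_div, integral_pow]
    have h1 : (Nat.factorial (n+1) : ℝ) = (n+1) * (Nat.factorial n : ℝ) := by
      rw [Nat.factorial_succ]; push_cast; ring
    rw [h1]
    have hf : (Nat.factorial n : ℝ) ≠ 0 := by positivity
    field_simp
    simp
  simp only [tm]
  rw [intervalIntegral.integral_sub hik hik1, hp k, hp (k+1)]

theorem decreasing_trial_expectation_preservation
    (F : ℕ → ℝ)
    (hnonneg : ∀ n, 0 ≤ F n)
    (hbdd : ∃ M : ℝ, ∀ n, F n ≤ M)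
    (N : ℕ) (x : ℝ) (hx : x ∈ Set.Icc (0:ℝ) 1) :
    (∫ y in (0:ℝ)..1,
        ((if y ≤ x then (1:ℝ) else 0) * V F (N + 1) y
          + (if x ≤ y then (1:ℝ) else 0) * F N))
      = V F N x := by
  obtain ⟨hx0, hx1⟩ := hx
  obtain ⟨M, hM⟩ := hbdd
  have hM0 : 0 ≤ M := le_trans (hnonneg 0) (hM 0)
  set h : ℕ → ℝ → ℝ := fun k y =>
    (if y ≤ x then (1:ℝ) else 0) * (tm k y * F (N + 1 + k))
      + (if k = 0 then (if x ≤ y then (1:ℝ) else 0) * F N else 0) with hh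
  -- rewrite first pieces as indicators
  have hrw1 : ∀ k, (fun y => (if y ≤ x then (1:ℝ) else 0) * (tm k y * F (N + 1 + k)))
      = (Iic x).indicator (fun y => tm k y * F (N + 1 + k)) := by
    intro k; funext y; by_cases hy : y ≤ x <;> simp [Set.indicator, hy]
  have hrw2 : (fun y => (if x ≤ y then (1:ℝ) else 0) * F N)
      = (Ici x).indicator (fun _ => F N) := by
    funext y; by_cases hy : x ≤ y <;> simp [Set.indicator, hy]
  -- integrability
  have hint1 : ∀ k, IntegrableOn
      (fun y => (if y ≤ x then (1:ℝ) else 0) * (tm k y * F (N + 1 + k))) (Ioc (0:ℝ) 1) := by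
    intro k
    rw [hrw1 k]
    have hc : Continuous fun y : ℝ => tm k y * F (N + 1 + k) := by
      unfold tm; fun_prop
    exact (hc.integrableOn_Ioc).indicator measurableSet_Iic
  have hint2' : IntegrableOn (fun y : ℝ => (if x ≤ y then (1:ℝ) else 0) * F N) (Ioc (0:ℝ) 1) := by
    rw [hrw2]
    exact (integrableOn_const measure_Ioc_lt_top.ne enorm_ne_top).indicator measurableSet_Ici
  have hint2 : ∀ k, IntegrableOn
      (fun y : ℝ => if k = 0 then (if x ≤ y then (1:ℝ) else 0) * F N else 0) (Ioc (0:ℝ) 1) := by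
    intro k
    by_cases hk : k = 0
    · simpa [hk] using hint2'
    · simp only [hk, if_false]
      exact integrableOn_const measure_Ioc_lt_top.ne enorm_ne_top
  have hint : ∀ k, IntegrableOn (h k) (Ioc (0:ℝ) 1) := fun k => (hint1 k).add (hint2 k)
  -- pointwise: integrand = tsum of h
  have heq : ∀ y ∈ Ioc (0:ℝ) 1,
      ((if y ≤ x then (1:ℝ) else 0) * V F (N + 1) y
        + (if x ≤ y then (1:ℝ) else 0) * F N) = ∑' k, h k y := by
    intro y hy
    have hy0 : (0:ℝ) ≤ y := le_of_lt hy.1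
    have hy1 : y ≤ 1 := hy.2
    have s1 : Summable fun k : ℕ => (if y ≤ x then (1:ℝ) else 0) * (tm k y * F (N + 1 + k)) :=
      (summable_tmF F M hnonneg hM hy0 hy1 (N + 1)).mul_left _
    have s2 : Summable fun k : ℕ =>
        (if k = 0 then (if x ≤ y then (1:ℝ) else 0) * F N else 0) :=
      (hasSum_ite_eq 0 _).summable
    rw [hh]
    rw [Summable.tsum_add s1 s2, tsum_mul_left, tsum_ite_eq, V_eq]
  -- summability of integrals of norms
  have hbound : ∀ k, ∀ y ∈ Ioc (0:ℝ) 1, ‖h k y‖ ≤ 2 * M * ((1:ℝ) ^ k / (Nat.factorial k : ℝ)) := by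
    intro k y hy
    have hy0 : (0:ℝ) ≤ y := le_of_lt hy.1
    have hy1 : y ≤ 1 := hy.2
    have ht0 := tm_nonneg hy0 hy1 k
    have ht1 := tm_le hy0 hy1 k
    have hF0 := hnonneg (N + 1 + k)
    have hF1 := hM (N + 1 + k)
    have hN0 := hnonneg N
    have hN1 := hM N
    have hfk : (1:ℝ) ≤ (Nat.factorial k : ℝ) := by exact_mod_cast Nat.factorial_pos k
    have hfk' : (0:ℝ) < (Nat.factorial k : ℝ) := by positivity
    have htF : tm k y * F (N + 1 + k) ≤ (1 / (Nat.factorial k : ℝ)) * M :=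
      mul_le_mul ht1 hF1 hF0 (by positivity)
    have htF0 : 0 ≤ tm k y * F (N + 1 + k) := mul_nonneg ht0 hF0
    have hpos : 0 ≤ h k y := by
      rw [hh]; dsimp only
      split_ifs <;> simp <;> positivity
    have e1 : (if y ≤ x then (1:ℝ) else 0) * (tm k y * F (N + 1 + k))
        ≤ tm k y * F (N + 1 + k) := by split_ifs <;> simp [htF0]
    have e2 : (if x ≤ y then (1:ℝ) else 0) * F N ≤ F N := by split_ifs <;> simp [hN0]
    rw [Real.norm_of_nonneg hpos, hh]
    dsimp only
    simp only [one_pow]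
    by_cases hk : k = 0
    · subst hk
      have htF1 : tm 0 y * F (N + 1 + 0) ≤ M := by
        calc tm 0 y * F (N + 1 + 0) ≤ 1 / ((Nat.factorial 0 : ℕ) : ℝ) * M := htF
          _ = M := by simp
      simp only [eq_self_iff_true, if_true, Nat.factorial_zero, Nat.cast_one, div_one]
      linarith
    · have hMk : (0:ℝ) ≤ 1 / (Nat.factorial k : ℝ) * M := by positivity
      simp only [hk, if_false, add_zero]
      calc (if y ≤ x then (1:ℝ) else 0) * (tm k y * F (N + 1 + k))
          ≤ tm k y * F (N + 1 + k) := e1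
        _ ≤ 1 / (Nat.factorial k : ℝ) * M := htF
        _ ≤ 2 * M * (1 / (Nat.factorial k : ℝ)) := by linarith
        _ = 2 * M * (1 / (Nat.factorial k : ℝ)) := rfl
  have hnormsum : Summable fun k : ℕ => ∫ y in Ioc (0:ℝ) 1, ‖h k y‖ := by
    refine Summable.of_nonneg_of_le
      (fun k => integral_nonneg fun y => norm_nonneg _)
      (fun k => ?_)
      ((Real.summable_pow_div_factorial 1).mul_left (2 * M))
    calc ∫ y in Ioc (0:ℝ) 1, ‖h k y‖
        ≤ ∫ _y in Ioc (0:ℝ) 1, 2 * M * ((1:ℝ) ^ k / (Nat.factorial k : ℝ)) :=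
          setIntegral_mono_on (hint k).norm
            (integrableOn_const measure_Ioc_lt_top.ne enorm_ne_top) measurableSet_Ioc
            (hbound k)
      _ = 2 * M * ((1:ℝ) ^ k / (Nat.factorial k : ℝ)) := by
          rw [setIntegral_const]; simp [Real.volume_Ioc]
  -- value of each integral
  have hS : volume (Ioc (0:ℝ) 1 ∩ Ici x) = ENNReal.ofReal (1 - x) := by
    apply le_antisymm
    · calc volume (Ioc (0:ℝ) 1 ∩ Ici x) ≤ volume (Icc x 1) :=
            measure_mono (fun y hy => ⟨hy.2, hy.1.2⟩)
        _ = ENNReal.ofReal (1 - x) := Real.volume_Icc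
    · calc ENNReal.ofReal (1 - x) = volume (Ioc x 1) := Real.volume_Ioc.symm
        _ ≤ volume (Ioc (0:ℝ) 1 ∩ Ici x) :=
            measure_mono (fun y hy => ⟨⟨lt_of_le_of_lt hx0 hy.1, hy.2⟩, le_of_lt hy.1⟩)
  have key : ∀ k, (∫ y in Ioc (0:ℝ) 1, h k y)
      = tm (k + 1) x * F (N + 1 + k) + (if k = 0 then (1 - x) * F N else 0) := by
    intro k
    rw [hh]
    dsimp only
    rw [integral_add (hint1 k) (hint2 k)]
    congr 1
    · have := hrw1 k
      calc (∫ y in Ioc (0:ℝ) 1, (if y ≤ x then (1:ℝ) else 0) * (tm k y * F (N + 1 + k)))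
          = ∫ y in Ioc (0:ℝ) 1, (Iic x).indicator (fun y => tm k y * F (N + 1 + k)) y := by
            rw [← this]
        _ = ∫ y in Ioc (0:ℝ) 1 ∩ Iic x, tm k y * F (N + 1 + k) :=
            setIntegral_indicator measurableSet_Iic
        _ = ∫ y in Ioc (0:ℝ) x, tm k y * F (N + 1 + k) := by
            rw [Set.Ioc_inter_Iic, min_eq_right hx1]
        _ = (∫ y in (0:ℝ)..x, tm k y) * F (N + 1 + k) := by
            rw [← intervalIntegral.integral_of_le hx0, intervalIntegral.integral_mul_const]
        _ = tm (k + 1) x * F (N + 1 + k) := by rw [integ_tm]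
    · by_cases hk : k = 0
      · subst hk
        simp only [if_true]
        calc (∫ y in Ioc (0:ℝ) 1, (if x ≤ y then (1:ℝ) else 0) * F N)
            = ∫ y in Ioc (0:ℝ) 1, (Ici x).indicator (fun _ => F N) y := by rw [← hrw2]
          _ = ∫ _y in Ioc (0:ℝ) 1 ∩ Ici x, F N := setIntegral_indicator measurableSet_Ici
          _ = (1 - x) * F N := by
              rw [setIntegral_const, measureReal_def, hS, ENNReal.toReal_ofReal (by linarith)]
              simp [smul_eq_mul]
      · simp [hk]
  -- assemble
  rw [intervalIntegral.integral_of_le zero_le_one,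
    setIntegral_congr_fun measurableSet_Ioc heq,
    ← MeasureTheory.integral_tsum_of_summable_integral_norm hint hnormsum]
  have sA : Summable fun k : ℕ => tm (k + 1) x * F (N + 1 + k) := by
    have h1 : Summable fun k : ℕ => tm (k + 1) x * F (N + (k + 1)) :=
      (summable_nat_add_iff 1).2 (summable_tmF F M hnonneg hM hx0 hx1 N)
    refine h1.congr fun k => ?_
    rw [show N + (k + 1) = N + 1 + k by ring]
  have s2' : Summable fun k : ℕ => (if k = 0 then (1 - x) * F N else 0) :=
    (hasSum_ite_eq 0 _).summable
  calc (∑' k, ∫ y in Ioc (0:ℝ) 1, h k y)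
      = ∑' k, (tm (k + 1) x * F (N + 1 + k) + (if k = 0 then (1 - x) * F N else 0)) :=
        tsum_congr key
    _ = (∑' k, tm (k + 1) x * F (N + 1 + k)) + (1 - x) * F N := by
        rw [Summable.tsum_add sA s2', tsum_ite_eq]
    _ = V F N x := by
        rw [V_eq, Summable.tsum_eq_zero_add (summable_tmF F M hnonneg hM hx0 hx1 N)]
        have h0 : tm 0 x * F (N + 0) = (1 - x) * F N := by
          simp [tm, Nat.factorial]
        rw [h0, add_comm]
        congr 1
        exact tsum_congr fun k => by rw [show N + (k + 1) = N + 1 + k by ring]
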